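/- Let 𝒱 be a finite set of views over schema σ, let Q be a CQ over σ, and let Q' be a CQ over σ_𝒱 that admits an expansion Q_E with respect to 𝒱. Then Q' is a 𝒱-rewriting of Q if and only if Q_E ≡ Q. -/
import Mathlib


/-- A relational atom (or fact): a relation symbol with a list of arguments.
Arguments are natural numbers, serving both as variables and as data values. -/
structure Atom where
  rel : ℕ
  args : List ℕ
deriving DecidableEq

/-- Apply a substitution to an atom. -/
def mapAtom (f : ℕ → ℕ) (A : Atom) : Atom := ⟨A.rel, A.args.map f⟩

/-- The variables of an atom. -/
def Atom.vars (A : Atom) : Finset ℕ := A.args.toFinset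

/-- The variables of a finite set of atoms. -/
def varsOf (B : Finset Atom) : Finset ℕ := B.biUnion Atom.vars

/-- A conjunctive query: a head atom and a finite set of body atoms. -/
structure CQ where
  head : Atom
  body : Finset Atom
deriving DecidableEq

/-- All variables of a conjunctive query. -/
def CQ.vars (Q : CQ) : Finset ℕ := Q.head.vars ∪ varsOf Q.body

/-- A schema: a set of relation symbols together with an arity function. -/
structure Schema where
  rels : Set ℕ
  ar : ℕ → ℕ

/-- An atom (or fact) over a schema. -/
def atomOver (σ : Schema) (A : Atom) : Prop :=
  A.rel ∈ σ.rels ∧ A.args.length = σ.ar A.rel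

/-- `Q` is a (well-formed) conjunctive query over schema `σ`:
nonempty body of σ-atoms, head relation symbol not in σ, and safety. -/
def isCQ (σ : Schema) (Q : CQ) : Prop :=
  Q.body.Nonempty ∧ (∀ A ∈ Q.body, atomOver σ A) ∧
  Q.head.rel ∉ σ.rels ∧ Q.head.vars ⊆ varsOf Q.body

/-- A database is a set of facts (finiteness is imposed where needed). -/
abbrev Database := Set Atom

/-- A database over a schema. -/
def isDBOver (σ : Schema) (D : Database) : Prop := ∀ F ∈ D, atomOver σ F

/-- The result of a conjunctive query on a database. -/
def evalCQ (Q : CQ) (D : Database) : Set Atom :=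
  { F | ∃ ν : ℕ → ℕ, (∀ A ∈ Q.body, mapAtom ν A ∈ D) ∧ mapAtom ν Q.head = F }

/-- Containment of conjunctive queries. -/
def containedCQ (Q1 Q2 : CQ) : Prop :=
  ∀ D : Database, D.Finite → evalCQ Q1 D ⊆ evalCQ Q2 D

/-- Equivalence of conjunctive queries. -/
def equivCQ (Q1 Q2 : CQ) : Prop :=
  ∀ D : Database, D.Finite → evalCQ Q1 D = evalCQ Q2 D

/-- A conjunctive query is minimal if no equivalent CQ has strictly fewer body atoms. -/
def isMinimal (Q : CQ) : Prop :=
  ∀ Q2 : CQ, equivCQ Q Q2 → Q.body.card ≤ Q2.body.card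

/-- A homomorphism from `Q2` to `Q1`. -/
def isHom (h : ℕ → ℕ) (Q2 Q1 : CQ) : Prop :=
  (∀ A ∈ Q2.body, mapAtom h A ∈ Q1.body) ∧ mapAtom h Q2.head = Q1.head

/-- A body homomorphism from `Q2` to `Q1`. -/
def isBodyHom (h : ℕ → ℕ) (Q2 Q1 : CQ) : Prop :=
  ∀ A ∈ Q2.body, mapAtom h A ∈ Q1.body

/-- A set of views over σ: each view is a CQ over σ and views have
pairwise distinct head relation symbols. -/
def isViewSet (σ : Schema) (𝒱 : Finset CQ) : Prop :=
  (∀ V ∈ 𝒱, isCQ σ V) ∧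
  ∀ V ∈ 𝒱, ∀ W ∈ 𝒱, V ≠ W → V.head.rel ≠ W.head.rel

/-- The 𝒱-defined database 𝒱(D). -/
def viewDB (𝒱 : Finset CQ) (D : Database) : Database :=
  ⋃ V ∈ 𝒱, evalCQ V D

/-- `Q'` is a CQ over the schema σ_𝒱 of the head relations of the views 𝒱. -/
def overViews (𝒱 : Finset CQ) (Q' : CQ) : Prop :=
  Q'.body.Nonempty ∧
  (∀ A ∈ Q'.body, ∃ V ∈ 𝒱, A.rel = V.head.rel ∧ A.args.length = V.head.args.length) ∧
  (∀ V ∈ 𝒱, Q'.head.rel ≠ V.head.rel) ∧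
  Q'.head.vars ⊆ varsOf Q'.body

/-- `Q'` is a 𝒱-rewriting of `Q`: `Q'` is over σ_𝒱 and `Q'(𝒱(D)) = Q(D)`
for every (finite) database `D` over σ. -/
def isRewriting (σ : Schema) (𝒱 : Finset CQ) (Q Q' : CQ) : Prop :=
  overViews 𝒱 Q' ∧
  ∀ D : Database, D.Finite → isDBOver σ D →
    evalCQ Q' (viewDB 𝒱 D) = evalCQ Q D

/-- `T` is a join tree for the atom set `B`. -/
def joinTreeProp (B : Finset Atom) (T : SimpleGraph {A : Atom // A ∈ B}) : Prop :=
  T.IsTree ∧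
  ∀ (x : ℕ) (A A' : {A : Atom // A ∈ B}) (p : T.Walk A A'), p.IsPath →
    x ∈ A.1.vars → x ∈ A'.1.vars → ∀ C ∈ p.support, x ∈ C.1.vars

/-- The atom set `B` has a join tree. -/
def hasJoinTree (B : Finset Atom) : Prop :=
  ∃ T : SimpleGraph {A : Atom // A ∈ B}, joinTreeProp B T

/-- A conjunctive query is acyclic if its body has a join tree. -/
def isAcyclicCQ (Q : CQ) : Prop := hasJoinTree Q.body

/-- A conjunctive query is free-connex acyclic. -/
def isFreeConnex (Q : CQ) : Prop :=
  isAcyclicCQ Q ∧ hasJoinTree (insert Q.head Q.body)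

/-- The bridge variables of `𝒜 ⊆ body(Q)`. -/
def bvars (Q : CQ) (𝒜 : Finset Atom) : Finset ℕ :=
  varsOf 𝒜 ∩ (Q.head.vars ∪ varsOf (Q.body \ 𝒜))

/-- An application of a view `V`: a substitution that does not unify any
quantified variable of `V` with another variable of `V`. -/
def isApplication (V : CQ) (α : ℕ → ℕ) : Prop :=
  ∀ x ∈ varsOf V.body, x ∉ V.head.vars →
    ∀ y ∈ CQ.vars V, y ≠ x → α x ≠ α y

/-- The query α(V). -/
def applyCQ (α : ℕ → ℕ) (V : CQ) : CQ :=
  ⟨mapAtom α V.head, V.body.image (mapAtom α)⟩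

/-- `(𝒜, V, α, ψ)` is a cover description for `Q`. -/
def isCoverDesc (Q : CQ) (𝒜 : Finset Atom) (V : CQ) (α ψ : ℕ → ℕ) : Prop :=
  𝒜 ⊆ Q.body ∧ isApplication V α ∧
  𝒜 ⊆ V.body.image (mapAtom α) ∧
  bvars Q 𝒜 ⊆ V.head.vars.image α ∧
  isBodyHom ψ (applyCQ α V) Q ∧
  ∀ x ∈ varsOf 𝒜, ψ x = x

/-- A cover partition for `Q` over `𝒱`: a collection of cover descriptions
whose atom sets partition `body(Q)`. -/
def isCoverPartition (Q : CQ) (𝒱 : Finset CQ) (m : ℕ)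
    (𝒜 : Fin m → Finset Atom) (V : Fin m → CQ) (α ψ : Fin m → ℕ → ℕ) : Prop :=
  (∀ i, V i ∈ 𝒱 ∧ isCoverDesc Q (𝒜 i) (V i) (α i) (ψ i)) ∧
  ∀ A ∈ Q.body, ∃! i, A ∈ 𝒜 i

/-- Consistency of a cover partition: a variable of any `α_j(V_j)` lies in the
range of another `α_i` only if it also lies in `bvars(𝒜_j)`. -/
def isConsistent (Q : CQ) (m : ℕ) (𝒜 : Fin m → Finset Atom) (V : Fin m → CQ)
    (α : Fin m → ℕ → ℕ) : Prop :=
  ∀ i j : Fin m, i ≠ j → ∀ z ∈ CQ.vars (applyCQ (α j) (V j)),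
    (∃ x ∈ CQ.vars (V i), α i x = z) → z ∈ bvars Q (𝒜 j)

/-- The query `Q_𝒞` induced by a (consistent) cover partition. -/
def inducedCQ (Q : CQ) (m : ℕ) (V : Fin m → CQ) (α : Fin m → ℕ → ℕ) : CQ :=
  ⟨Q.head, Finset.image (fun i => mapAtom (α i) (V i).head) Finset.univ⟩

/-- Quantified variable disjointness for a family of view applications. -/
def QVD (m : ℕ) (V : Fin m → CQ) (α : Fin m → ℕ → ℕ) : Prop :=
  ∀ i j : Fin m, i ≠ j → ∀ x ∈ varsOf (V i).body, x ∉ (V i).head.vars →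
    ∀ y ∈ CQ.vars (V j), α i x ≠ α j y

/-- `QE` is an expansion of `Q'` with respect to the views `𝒱`. -/
def isExpansion (𝒱 : Finset CQ) (Q' QE : CQ) : Prop :=
  ∃ (m : ℕ) (A' : Fin m → Atom) (V : Fin m → CQ) (α : Fin m → ℕ → ℕ),
    (∀ i, V i ∈ 𝒱 ∧ isApplication (V i) (α i) ∧ A' i = mapAtom (α i) (V i).head) ∧
    Q'.body = Finset.image A' Finset.univ ∧
    QVD m V α ∧
    QE.head = Q'.head ∧
    QE.body = Finset.biUnion Finset.univ (fun i => (V i).body.image (mapAtom (α i)))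

/-- `atoms(x)`: the body atoms of `Q` containing the variable `x`. -/
def atomsWith (Q : CQ) (x : ℕ) : Finset Atom :=
  Q.body.filter (fun A => x ∈ A.vars)

/-- Hierarchical conjunctive queries. -/
def isHierarchical (Q : CQ) : Prop :=
  ∀ x y : ℕ, atomsWith Q x ⊆ atomsWith Q y ∨ atomsWith Q y ⊆ atomsWith Q x ∨
    atomsWith Q x ∩ atomsWith Q y = ∅

/-- q-hierarchical conjunctive queries. -/
def isQHierarchical (Q : CQ) : Prop :=
  isHierarchical Q ∧ ∀ x y : ℕ, atomsWith Q x ⊂ atomsWith Q y →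
    x ∈ Q.head.vars → y ∈ Q.head.vars

/-- `P` is a partition of `body(Q)` witnessing weak head arity at most `k`. -/
def witnessesWHA (Q : CQ) (k n : ℕ) (P : Fin n → Finset Atom) : Prop :=
  (∀ i, (P i).Nonempty) ∧ (∀ i, P i ⊆ Q.body) ∧ (∀ A ∈ Q.body, ∃! i, A ∈ P i) ∧
  (∀ i, (varsOf (P i) ∩ Q.head.vars).card ≤ k) ∧
  (∀ i j, i ≠ j → ∀ x ∈ varsOf (P i), x ∈ varsOf (P j) → x ∈ Q.head.vars)

/-- `Q` has weak head arity at most `k`. -/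
def hasWHAle (Q : CQ) (k : ℕ) : Prop := ∃ n P, witnessesWHA Q k n P

/-- The weak head arity of `Q`. -/
noncomputable def weakHeadArity (Q : CQ) : ℕ := sInf {k | hasWHAle Q k}

/-- The cover graph of `Q`: vertices are the body atoms, with an edge between
two atoms iff they share a variable not occurring in the head. -/
def coverGraph (Q : CQ) : SimpleGraph {A : Atom // A ∈ Q.body} :=
  SimpleGraph.fromRel (fun A B => ∃ x, x ∈ A.1.vars ∧ x ∈ B.1.vars ∧ x ∉ Q.head.vars)

/-- A subset `s` of the atom set `B` is connected in the (join) tree `T`. -/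
def connectedIn (B : Finset Atom) (T : SimpleGraph {A : Atom // A ∈ B}) (s : Finset Atom) : Prop :=
  (T.induce {A : {A : Atom // A ∈ B} | A.1 ∈ s}).Connected

lemma mapAtom_mapAtom (f g : ℕ → ℕ) (A : Atom) :
    mapAtom f (mapAtom g A) = mapAtom (f ∘ g) A := by
  simp [mapAtom, List.map_map]

lemma mapAtom_congr {f g : ℕ → ℕ} {A : Atom} (h : ∀ x ∈ A.args, f x = g x) :
    mapAtom f A = mapAtom g A := by
  unfold mapAtom
  congr 1
  exact List.map_congr_left h

lemma atomOver_mapAtom {σ : Schema} {A : Atom} (h : atomOver σ A) (f : ℕ → ℕ) :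
    atomOver σ (mapAtom f A) := ⟨h.1, by simpa [mapAtom] using h.2⟩

lemma map_eq_map_mem {f g : ℕ → ℕ} {l : List ℕ} (h : l.map f = l.map g)
    {x : ℕ} (hx : x ∈ l) : f x = g x := by
  induction l with
  | nil => cases hx
  | cons a t ih =>
    simp only [List.map_cons, List.cons.injEq] at h
    rcases List.mem_cons.mp hx with rfl | hx
    · exact h.1
    · exact ih h.2 hx

/-- Evaluation of a CQ whose body atoms are over σ only depends on the
σ-part of the database. -/
lemma eval_restrict (σ : Schema) (Q : CQ) (hb : ∀ A ∈ Q.body, atomOver σ A)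
    (D : Database) : evalCQ Q D = evalCQ Q {F ∈ D | atomOver σ F} := by
  ext F
  simp only [evalCQ, Set.mem_setOf_eq]
  constructor
  · rintro ⟨ν, hν, rfl⟩
    exact ⟨ν, fun A hA => ⟨hν A hA, atomOver_mapAtom (hb A hA) ν⟩, rfl⟩
  · rintro ⟨ν, hν, rfl⟩
    exact ⟨ν, fun A hA => (hν A hA).1, rfl⟩

/-- Key lemma: the result of `Q'` on `𝒱(D)` equals the result of its
expansion `QE` on `D`, for every database `D`. -/
lemma expansion_eval (𝒱 : Finset CQ)
    (hdist : ∀ V ∈ 𝒱, ∀ W ∈ 𝒱, V ≠ W → V.head.rel ≠ W.head.rel)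
    (Q' QE : CQ) (hsafe : Q'.head.vars ⊆ varsOf Q'.body)
    (hE : isExpansion 𝒱 Q' QE) (D : Database) :
    evalCQ Q' (viewDB 𝒱 D) = evalCQ QE D := by
  classical
  obtain ⟨m, A', V, α, hVi, hbody', hqvd, hhead, hbodyE⟩ := hE
  ext F
  simp only [evalCQ, Set.mem_setOf_eq]
  constructor
  · rintro ⟨ν', hν', rfl⟩
    -- For each i, extract a valuation μ i witnessing ν'(A' i) ∈ evalCQ (V i) D.
    have hμex : ∀ i : Fin m, ∃ μ : ℕ → ℕ,
        (∀ A ∈ (V i).body, mapAtom μ A ∈ D) ∧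
        mapAtom μ (V i).head = mapAtom ν' (A' i) := by
      intro i
      have hAi : A' i ∈ Q'.body := by
        rw [hbody']; exact Finset.mem_image_of_mem A' (Finset.mem_univ i)
      have hmem := hν' (A' i) hAi
      simp only [viewDB, Set.mem_iUnion] at hmem
      obtain ⟨W, hW, μ, hμ1, hμ2⟩ := hmem
      have hWVi : W = V i := by
        by_contra hne
        have h2 : (mapAtom ν' (A' i)).rel = (V i).head.rel := by
          rw [(hVi i).2.2]; rfl
        exact hdist W hW (V i) (hVi i).1 hne (by rw [← h2, ← hμ2]; rfl)
      subst hWVi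
      exact ⟨μ, hμ1, hμ2⟩
    choose μ hμD hμh using hμex
    -- quantified variables of V i
    set qv : Fin m → ℕ → Prop :=
      fun i x => x ∈ varsOf (V i).body ∧ x ∉ (V i).head.vars with hqvdef
    have uniq : ∀ (i : Fin m) (x : ℕ), qv i x → ∀ (j : Fin m) (y : ℕ), qv j y →
        α j y = α i x → j = i ∧ y = x := by
      rintro i x ⟨hx1, hx2⟩ j y ⟨hy1, hy2⟩ heq
      have hxv : x ∈ CQ.vars (V i) := Finset.mem_union_right _ hx1
      have hji : j = i := by
        by_contra hne
        exact hqvd j i hne y hy1 hy2 x hxv heq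
      subst hji
      refine ⟨rfl, ?_⟩
      by_contra hne
      exact (hVi j).2.1 y hy1 hy2 x hxv (fun h => hne h.symm) heq
    set ν : ℕ → ℕ := fun z =>
      if h : ∃ p : Fin m × ℕ, qv p.1 p.2 ∧ α p.1 p.2 = z then μ h.choose.1 h.choose.2
      else ν' z with hνdef
    -- quantified variables get the value from μ
    have hνq : ∀ (i : Fin m) (x : ℕ), qv i x → ν (α i x) = μ i x := by
      intro i x hx
      have hex : ∃ p : Fin m × ℕ, qv p.1 p.2 ∧ α p.1 p.2 = α i x := ⟨(i, x), hx, rfl⟩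
      have hspec := hex.choose_spec
      obtain ⟨hji, hyx⟩ := uniq i x hx hex.choose.1 hex.choose.2 hspec.1 hspec.2
      simp only [hνdef]
      rw [dif_pos hex, hji, hyx]
    -- head variables keep the value of ν'
    have hνh : ∀ (i : Fin m) (x : ℕ), x ∈ (V i).head.vars → ν (α i x) = ν' (α i x) := by
      intro i x hx
      have hxv : x ∈ CQ.vars (V i) := Finset.mem_union_left _ hx
      have hnex : ¬ ∃ p : Fin m × ℕ, qv p.1 p.2 ∧ α p.1 p.2 = α i x := by
        rintro ⟨⟨j, y⟩, ⟨hy1, hy2⟩, heq⟩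
        by_cases hji : j = i
        · subst hji
          exact (hVi j).2.1 y hy1 hy2 x hxv (fun h => hy2 (h ▸ hx)) heq
        · exact hqvd j i hji y hy1 hy2 x hxv heq
      simp only [hνdef]
      rw [dif_neg hnex]
    -- on all variables of V i, ν ∘ α i agrees with μ i
    have hνall : ∀ (i : Fin m) (x : ℕ), x ∈ CQ.vars (V i) → ν (α i x) = μ i x := by
      intro i x hx
      by_cases hxh : x ∈ (V i).head.vars
      · have h1 : ν (α i x) = ν' (α i x) := hνh i x hxh
        have h2 : mapAtom (μ i) (V i).head = mapAtom (fun z => ν' (α i z)) (V i).head := by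
          rw [hμh i, (hVi i).2.2, mapAtom_mapAtom]; rfl
        have h3 : (V i).head.args.map (μ i) = (V i).head.args.map (fun z => ν' (α i z)) :=
          congrArg Atom.args h2
        have hxargs : x ∈ (V i).head.args := List.mem_toFinset.mp hxh
        rw [h1, ← map_eq_map_mem h3 hxargs]
      · have hxb : x ∈ varsOf (V i).body := by
          rcases Finset.mem_union.mp hx with h | h
          · exact absurd h hxh
          · exact h
        exact hνq i x ⟨hxb, hxh⟩
    refine ⟨ν, ?_, ?_⟩
    · intro A hA
      rw [hbodyE] at hA
      simp only [Finset.mem_biUnion, Finset.mem_univ, Finset.mem_image, true_and] at hA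
      obtain ⟨i, B, hB, rfl⟩ := hA
      rw [mapAtom_mapAtom]
      have : mapAtom (ν ∘ α i) B = mapAtom (μ i) B := by
        apply mapAtom_congr
        intro x hxargs
        apply hνall
        apply Finset.mem_union_right
        exact Finset.mem_biUnion.mpr ⟨B, hB, List.mem_toFinset.mpr hxargs⟩
      rw [this]
      exact hμD i B hB
    · rw [hhead]
      apply mapAtom_congr
      intro x hxargs
      have hxv : x ∈ varsOf Q'.body := hsafe (List.mem_toFinset.mpr hxargs)
      obtain ⟨A, hA, hxA⟩ := Finset.mem_biUnion.mp hxv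
      rw [hbody'] at hA
      simp only [Finset.mem_image, Finset.mem_univ, true_and] at hA
      obtain ⟨i, rfl⟩ := hA
      rw [(hVi i).2.2] at hxA
      obtain ⟨y, hy, rfl⟩ := List.mem_map.mp (List.mem_toFinset.mp hxA)
      exact hνh i y (List.mem_toFinset.mpr hy)
  · rintro ⟨ν, hν, rfl⟩
    refine ⟨ν, ?_, by rw [hhead]⟩
    intro A hA
    rw [hbody'] at hA
    simp only [Finset.mem_image, Finset.mem_univ, true_and] at hA
    obtain ⟨i, rfl⟩ := hA
    simp only [viewDB, Set.mem_iUnion]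
    refine ⟨V i, (hVi i).1, ?_⟩
    refine ⟨ν ∘ α i, ?_, ?_⟩
    · intro B hB
      rw [← mapAtom_mapAtom]
      apply hν
      rw [hbodyE]
      exact Finset.mem_biUnion.mpr ⟨i, Finset.mem_univ i,
        Finset.mem_image_of_mem _ hB⟩
    · rw [(hVi i).2.2, mapAtom_mapAtom]

/-- Let `Q'` be a CQ over `σ_𝒱` that admits an expansion `QE` w.r.t.
`𝒱`. Then `Q'` is a 𝒱-rewriting of `Q` if and only if `QE ≡ Q`. -/
theorem statement15 (σ : Schema) (𝒱 : Finset CQ) (h𝒱 : isViewSet σ 𝒱)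
    (Q : CQ) (hQ : isCQ σ Q) (hfresh : ∀ V ∈ 𝒱, Q.head.rel ≠ V.head.rel)
    (Q' : CQ) (hQ' : overViews 𝒱 Q')
    (QE : CQ) (hE : isExpansion 𝒱 Q' QE) :
    isRewriting σ 𝒱 Q Q' ↔ equivCQ QE Q := by
  have hkey : ∀ D : Database, evalCQ Q' (viewDB 𝒱 D) = evalCQ QE D :=
    expansion_eval 𝒱 h𝒱.2 Q' QE hQ'.2.2.2 hE
  -- QE's body atoms are over σ
  have hQEbody : ∀ A ∈ QE.body, atomOver σ A := by
    obtain ⟨m, A', V, α, hVi, hbody', hqvd, hhead, hbodyE⟩ := hE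
    intro A hA
    rw [hbodyE] at hA
    simp only [Finset.mem_biUnion, Finset.mem_univ, Finset.mem_image, true_and] at hA
    obtain ⟨i, B, hB, rfl⟩ := hA
    exact atomOver_mapAtom ((h𝒱.1 (V i) (hVi i).1).2.1 B hB) (α i)
  constructor
  · rintro ⟨-, hrw⟩ D hD
    set D' : Database := {F ∈ D | atomOver σ F} with hD'
    have hD'fin : D'.Finite := hD.subset (Set.sep_subset _ _)
    have hD'over : isDBOver σ D' := fun F hF => hF.2
    rw [eval_restrict σ QE hQEbody D, eval_restrict σ Q hQ.2.1 D,
      ← hkey D', hrw D' hD'fin hD'over]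
  · intro hequiv
    refine ⟨hQ', fun D hD _ => ?_⟩
    rw [hkey D]
    exact hequiv D hD
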